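/- A finite simple graph G is a split graph if and only if its nonincreasing degree sequence d = (d_1,...,d_n) satisfies Σ_{i=1}^m d_i = m(m−1) + Σ_{i=m+1}^n d_i, where m = m(d) = max{i : d_i ≥ i−1}. -/

import Mathlib

open SimpleGraph Finset

/-- `s` is an independent set in `G`. -/
def IsIndepSet {α : Type*} (G : SimpleGraph α) (s : Set α) : Prop :=
  s.Pairwise fun a b => ¬ G.Adj a b

/-- `(G, A, B)` is a splitted graph: `A` an independent set and `B` a clique
partitioning the vertex set of `G`. -/
def IsSplitted {α : Type*} (G : SimpleGraph α) (A B : Set α) : Prop :=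
  _root_.IsIndepSet G A ∧ G.IsClique B ∧ A ∪ B = Set.univ ∧ Disjoint A B

/-- `G` is a split graph. -/
def IsSplitGraph {α : Type*} (G : SimpleGraph α) : Prop :=
  ∃ A B : Set α, IsSplitted G A B

/-- Tyshkevich composition `(G, A, B) ∘ H`: the disjoint union of `G` and `H`
together with all edges between the clique `B` and the vertices of `H`. -/
def comp {α β : Type*} (G : SimpleGraph α) (B : Set α) (H : SimpleGraph β) :
    SimpleGraph (α ⊕ β) where
  Adj x y :=
    match x, y with
    | Sum.inl a, Sum.inl a' => G.Adj a a'
    | Sum.inr b, Sum.inr b' => H.Adj b b'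
    | Sum.inl a, Sum.inr _ => a ∈ B
    | Sum.inr _, Sum.inl a => a ∈ B
  symm := by
    constructor
    rintro (a | b) (a' | b') h
    · exact G.symm.symm _ _ h
    · exact h
    · exact h
    · exact H.symm.symm _ _ h
  loopless := by
    constructor
    rintro (a | b) h
    · exact G.loopless.irrefl a h
    · exact H.loopless.irrefl b h

/-- The degree of a vertex, as the cardinality of its neighborhood. -/
noncomputable def deg {α : Type*} (G : SimpleGraph α) (v : α) : ℕ :=
  (G.neighborSet v).ncard

/-- The disjoint union of two edges. -/
def twoK2 : SimpleGraph (Fin 4) :=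
  SimpleGraph.fromRel fun a b => (a.val = 0 ∧ b.val = 1) ∨ (a.val = 2 ∧ b.val = 3)

/-- The 4-cycle. -/
def cycle4 : SimpleGraph (Fin 4) :=
  SimpleGraph.fromRel fun a b =>
    (a.val = 0 ∧ b.val = 1) ∨ (a.val = 1 ∧ b.val = 2) ∨
    (a.val = 2 ∧ b.val = 3) ∨ (a.val = 3 ∧ b.val = 0)

/-- The path on four vertices. -/
def path4 : SimpleGraph (Fin 4) :=
  SimpleGraph.fromRel fun a b =>
    (a.val = 0 ∧ b.val = 1) ∨ (a.val = 1 ∧ b.val = 2) ∨ (a.val = 2 ∧ b.val = 3)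

/-- The 5-cycle. -/
def cycle5 : SimpleGraph (Fin 5) :=
  SimpleGraph.fromRel fun a b =>
    (a.val = 0 ∧ b.val = 1) ∨ (a.val = 1 ∧ b.val = 2) ∨
    (a.val = 2 ∧ b.val = 3) ∨ (a.val = 3 ∧ b.val = 4) ∨ (a.val = 4 ∧ b.val = 0)

private lemma degSplit {V : Type*} [Fintype V] [DecidableEq V] (G : SimpleGraph V)
    [DecidableRel G.Adj] (S : Finset V) (v : V) :
    G.degree v = (S.filter (G.Adj v)).card + ((Sᶜ).filter (G.Adj v)).card := by
  rw [← SimpleGraph.card_neighborFinset_eq_degree, SimpleGraph.neighborFinset_eq_filter,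
    ← Finset.union_compl S, Finset.filter_union, Finset.card_union_of_disjoint]
  exact Finset.disjoint_filter_filter disjoint_compl_right

private lemma doubleCount {V : Type*} [Fintype V] [DecidableEq V] (G : SimpleGraph V)
    [DecidableRel G.Adj] (S T : Finset V) :
    ∑ v ∈ S, (T.filter (G.Adj v)).card = ∑ w ∈ T, (S.filter (G.Adj w)).card := by
  simp_rw [Finset.card_filter]
  rw [Finset.sum_comm]
  exact Finset.sum_congr rfl fun w _ => Finset.sum_congr rfl fun v _ =>
    if_congr (G.adj_comm v w) rfl rfl

private lemma cardFilterLt (n m : ℕ) (h : m ≤ n) :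
    (Finset.univ.filter (fun i : Fin n => (i:ℕ) < m)).card = m := by
  rw [← Finset.card_range m]
  apply Finset.card_bij (fun (i : Fin n) _ => (i : ℕ))
  · intro a ha; simp at ha ⊢; exact ha
  · intro a _ b _ hab; exact Fin.ext hab
  · intro b hb; simp at hb; exact ⟨⟨b, lt_of_lt_of_le hb h⟩, by simpa using hb, rfl⟩

/-- Hammer–Simeone / Tyshkevich et al.: a graph is split iff its
nonincreasing degree sequence satisfies
`Σ_{i=1}^m d_i = m(m−1) + Σ_{i=m+1}^n d_i` where `m = m(d) = max{i : d_i ≥ i−1}`.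
Here the 1-based term `d_i` is `d ⟨i-1⟩`, and `m` is expressed accordingly. -/
theorem stmt9 (n : ℕ) (G : SimpleGraph (Fin n)) (d : Fin n → ℕ) (hanti : Antitone d)
    (hdeg : ∀ i, deg G i = d i) :
    IsSplitGraph G ↔
      ∑ i ∈ Finset.univ.filter (fun i : Fin n =>
          (i : ℕ) < (Finset.univ.filter (fun j : Fin n => (j : ℕ) ≤ d j)).sup
            (fun j : Fin n => (j : ℕ) + 1)), d i =
        ((Finset.univ.filter (fun j : Fin n => (j : ℕ) ≤ d j)).sup
            (fun j : Fin n => (j : ℕ) + 1)) *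
          (((Finset.univ.filter (fun j : Fin n => (j : ℕ) ≤ d j)).sup
            (fun j : Fin n => (j : ℕ) + 1)) - 1) +
        ∑ i ∈ Finset.univ.filter (fun i : Fin n =>
          ¬ (i : ℕ) < (Finset.univ.filter (fun j : Fin n => (j : ℕ) ≤ d j)).sup
            (fun j : Fin n => (j : ℕ) + 1)), d i := by
  classical
  haveI : DecidableRel G.Adj := fun a b => Classical.dec _
  set m := (Finset.univ.filter (fun j : Fin n => (j : ℕ) ≤ d j)).sup
      (fun j : Fin n => (j : ℕ) + 1) with hmdef
  have hdeg' : ∀ i, G.degree i = d i := by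
    intro i
    rw [← hdeg i, deg, ← SimpleGraph.card_neighborFinset_eq_degree,
      SimpleGraph.neighborFinset_def, Set.ncard_eq_toFinset_card']
  have hmn : m ≤ n := Finset.sup_le fun j _ => j.isLt
  set S := Finset.univ.filter (fun i : Fin n => (i : ℕ) < m) with hSdef
  set T := Finset.univ.filter (fun i : Fin n => ¬ (i : ℕ) < m) with hTdef
  have hTS : T = Sᶜ := by
    rw [hSdef, hTdef]
    ext x; simp
  have hcardS : S.card = m := cardFilterLt n m hmn
  -- index facts
  have hSge : ∀ i : Fin n, (i : ℕ) < m → (i : ℕ) ≤ d i := by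
    intro i hi
    rw [hmdef] at hi
    obtain ⟨j, hj, hij⟩ := Finset.lt_sup_iff.mp hi
    simp only [Finset.mem_filter] at hj
    have hji : (i : ℕ) ≤ (j : ℕ) := Nat.lt_succ_iff.mp hij
    calc (i : ℕ) ≤ (j : ℕ) := hji
      _ ≤ d j := hj.2
      _ ≤ d i := hanti (Fin.le_def.mpr hji)
  have hTlt : ∀ i : Fin n, m ≤ (i : ℕ) → ¬ ((i : ℕ) ≤ d i) := by
    intro i hi hcon
    have : (i : ℕ) + 1 ≤ m := Finset.le_sup (f := fun j : Fin n => (j : ℕ) + 1)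
      (Finset.mem_filter.mpr ⟨Finset.mem_univ _, hcon⟩)
    omega
  have hSm : ∀ i : Fin n, (i : ℕ) < m → m ≤ d i + 1 := by
    intro i hi
    have h1 : 1 ≤ m := by omega
    have hm1 : m - 1 < n := by omega
    have h2 := hSge ⟨m - 1, hm1⟩ (by simp; omega)
    have h3 : d ⟨m - 1, hm1⟩ ≤ d i := hanti (Fin.le_def.mpr (by simp; omega))
    simp at h2
    omega
  have hTm : ∀ i : Fin n, m ≤ (i : ℕ) → d i < m := by
    intro i hi
    have hmn' : m < n := lt_of_le_of_lt hi i.isLt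
    have h1 : ¬ ((⟨m, hmn'⟩ : Fin n) : ℕ) ≤ d ⟨m, hmn'⟩ := hTlt ⟨m, hmn'⟩ (by simp)
    have h2 : d i ≤ d ⟨m, hmn'⟩ := hanti (Fin.le_def.mpr (by simpa using hi))
    simp at h1
    omega
  have hptsplit : ∀ (X : Finset (Fin n)) v,
      d v = (X.filter (G.Adj v)).card + ((Xᶜ).filter (G.Adj v)).card := by
    intro X v
    rw [← hdeg' v]
    exact degSplit G X v
  constructor

  · intro hsplit
    obtain ⟨A0, B0, hA0, hB0, hunion, hdisj⟩ := hsplit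
    have hA0eq : A0 = B0ᶜ := by
      apply Set.Subset.antisymm
      · intro x hx hxB
        exact Set.disjoint_left.mp hdisj hx hxB
      · intro x hx
        have hx' : x ∈ A0 ∪ B0 := hunion ▸ Set.mem_univ x
        rcases hx' with h' | h'
        · exact h'
        · exact absurd h' hx
    set cand : Finset (Finset (Fin n)) := Finset.univ.filter
      (fun B => G.IsClique (↑B : Set (Fin n)) ∧ _root_.IsIndepSet G (↑(Bᶜ) : Set (Fin n)))
      with hcanddef
    have hcoe : ((Finset.univ.filter (· ∈ B0) : Finset (Fin n)) : Set (Fin n)) = B0 := by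
      ext x; simp
    have hcand0 : (Finset.univ.filter (· ∈ B0) : Finset (Fin n)) ∈ cand := by
      rw [hcanddef, Finset.mem_filter]
      refine ⟨Finset.mem_univ _, ?_, ?_⟩
      · rw [hcoe]; exact hB0
      · rw [Finset.coe_compl, hcoe, ← hA0eq]; exact hA0
    obtain ⟨B, hBmem, hBmax⟩ := Finset.exists_max_image cand Finset.card ⟨_, hcand0⟩
    rw [hcanddef, Finset.mem_filter] at hBmem
    obtain ⟨-, hBclique, hAindep⟩ := hBmem
    set k := B.card with hk
    set A := Bᶜ with hAdef
    have hBdeg : ∀ v ∈ B, k ≤ d v + 1 := by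
      intro v hv
      have hsub : B.erase v ⊆ G.neighborFinset v := by
        intro w hw
        obtain ⟨hwv, hwB⟩ := Finset.mem_erase.mp hw
        exact (SimpleGraph.mem_neighborFinset G v w).mpr
          (hBclique (Finset.mem_coe.mpr hv) (Finset.mem_coe.mpr hwB) (Ne.symm hwv))
      have hc := Finset.card_le_card hsub
      rw [Finset.card_erase_of_mem hv, SimpleGraph.card_neighborFinset_eq_degree,
        hdeg'] at hc
      omega
    have hneighborsA : ∀ v ∈ A, G.neighborFinset v ⊆ B := by
      intro v hv w hw
      by_contra hwB
      have hadj : G.Adj v w := (SimpleGraph.mem_neighborFinset G v w).mp hw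
      exact hAindep (Finset.mem_coe.mpr hv) (Finset.mem_coe.mpr (Finset.mem_compl.mpr hwB))
        (G.ne_of_adj hadj) hadj
    have hAdeg : ∀ v ∈ A, d v < k := by
      intro v hv
      by_contra hcon
      push_neg at hcon
      have hdegv : k ≤ G.degree v := by rw [hdeg']; exact hcon
      have hNB : G.neighborFinset v = B := by
        apply Finset.eq_of_subset_of_card_le (hneighborsA v hv)
        rw [SimpleGraph.card_neighborFinset_eq_degree]; exact hdegv
      have hvB : v ∉ B := Finset.mem_compl.mp hv
      have hmemcand : insert v B ∈ cand := by
        rw [hcanddef, Finset.mem_filter]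
        refine ⟨Finset.mem_univ _, ?_, ?_⟩
        · rw [Finset.coe_insert]
          refine hBclique.insert ?_
          intro b hb _
          exact (SimpleGraph.mem_neighborFinset G v b).mp (hNB ▸ Finset.mem_coe.mp hb)
        · intro x hx y hy hne hadj
          have hsub : ((insert v B)ᶜ : Finset (Fin n)) ⊆ Bᶜ :=
            Finset.compl_subset_compl.mpr (Finset.subset_insert v B)
          exact hAindep (Finset.mem_coe.mpr (hsub (Finset.mem_coe.mp hx)))
            (Finset.mem_coe.mpr (hsub (Finset.mem_coe.mp hy))) hne hadj
      have := hBmax _ hmemcand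
      rw [Finset.card_insert_of_notMem hvB] at this
      omega
    have hkn : k ≤ n := by
      rw [hk]
      calc B.card ≤ (Finset.univ : Finset (Fin n)).card := Finset.card_le_univ B
        _ = n := by simp
    have hmk : m = k := by
      apply le_antisymm
      · rw [hmdef]
        apply Finset.sup_le
        intro j hj
        rw [Finset.mem_filter] at hj
        by_contra hcon
        push_neg at hcon
        have hks : k ≤ (j : ℕ) := by omega
        have hsubset : (Finset.univ.filter (fun i : Fin n => (i : ℕ) ≤ (j : ℕ))) ⊆ B := by
          intro i hi
          rw [Finset.mem_filter] at hi
          have hdi : k ≤ d i := by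
            have h1 : d j ≤ d i := hanti (Fin.le_def.mpr hi.2)
            omega
          by_contra hiB
          have hiA : i ∈ A := Finset.mem_compl.mpr hiB
          have := hAdeg i hiA
          omega
        have hcard2 : (Finset.univ.filter (fun i : Fin n => (i : ℕ) ≤ (j : ℕ))).card
            = (j : ℕ) + 1 := by
          have hfeq : Finset.univ.filter (fun i : Fin n => (i : ℕ) ≤ (j : ℕ))
              = Finset.univ.filter (fun i : Fin n => (i : ℕ) < (j : ℕ) + 1) := by
            ext i; simp [Nat.lt_succ_iff]
          rw [hfeq, cardFilterLt n ((j : ℕ) + 1) j.isLt]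
        have := Finset.card_le_card hsubset
        rw [hcard2] at this
        omega
      · rcases Nat.eq_zero_or_pos k with h0 | hpos
        · omega
        have hk1n : k - 1 < n := by omega
        have hdj : ((⟨k - 1, hk1n⟩ : Fin n) : ℕ) ≤ d ⟨k - 1, hk1n⟩ := by
          show k - 1 ≤ d ⟨k - 1, hk1n⟩
          by_contra hcon
          push_neg at hcon
          have hsub : B ⊆ Finset.univ.filter (fun i : Fin n => (i : ℕ) < k - 1) := by
            intro v hv
            rw [Finset.mem_filter]
            refine ⟨Finset.mem_univ _, ?_⟩
            by_contra hge
            push_neg at hge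
            have h1 : d v ≤ d ⟨k - 1, hk1n⟩ := hanti (Fin.le_def.mpr (by simpa using hge))
            have h2 := hBdeg v hv
            omega
          have := Finset.card_le_card hsub
          rw [cardFilterLt n (k - 1) (by omega)] at this
          omega
        have hle : ((⟨k - 1, hk1n⟩ : Fin n) : ℕ) + 1 ≤ m := by
          rw [hmdef]
          exact Finset.le_sup (f := fun j : Fin n => (j : ℕ) + 1)
            (Finset.mem_filter.mpr ⟨Finset.mem_univ _, hdj⟩)
        have hle' : k - 1 + 1 ≤ m := hle
        omega
    -- sums over S equal sums over B
    have hScard : S.card = k := by rw [hcardS, hmk]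
    have hmemS : ∀ v : Fin n, v ∈ S ↔ (v : ℕ) < m := by
      intro v; rw [hSdef, Finset.mem_filter]; simp
    have hdSdiff : ∀ v ∈ S \ B, d v + 1 = m := by
      intro v hv
      obtain ⟨hvS, hvB⟩ := Finset.mem_sdiff.mp hv
      have h1 := hSm v ((hmemS v).mp hvS)
      have h2 : d v < k := hAdeg v (Finset.mem_compl.mpr hvB)
      omega
    have hdBdiff : ∀ v ∈ B \ S, d v + 1 = m := by
      intro v hv
      obtain ⟨hvB, hvS⟩ := Finset.mem_sdiff.mp hv
      have h1 := hBdeg v hvB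
      have h2 : d v < m := hTm v (by
        have := (hmemS v).not.mp hvS
        omega)
      omega
    have hcards : (S \ B).card = (B \ S).card := Finset.card_sdiff_comm (by rw [hScard])
    have hsumdiff : ∑ v ∈ S \ B, d v = ∑ v ∈ B \ S, d v := by
      have e1 : ∑ v ∈ S \ B, (d v + 1) = (S \ B).card * m := by
        rw [Finset.sum_congr rfl hdSdiff, Finset.sum_const, smul_eq_mul]
      have e2 : ∑ v ∈ B \ S, (d v + 1) = (B \ S).card * m := by
        rw [Finset.sum_congr rfl hdBdiff, Finset.sum_const, smul_eq_mul]
      rw [Finset.sum_add_distrib, Finset.sum_const, smul_eq_mul, mul_one] at e1 e2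
      rw [← hcards] at e2
      omega
    have hsumSB : ∑ v ∈ S, d v = ∑ v ∈ B, d v := by
      rw [← Finset.sum_inter_add_sum_sdiff S B d, ← Finset.sum_inter_add_sum_sdiff B S d,
        Finset.inter_comm, hsumdiff]
    have hsumTA : ∑ v ∈ T, d v = ∑ v ∈ A, d v := by
      have h1 : ∑ v ∈ S, d v + ∑ v ∈ Sᶜ, d v = ∑ v ∈ Finset.univ, d v :=
        Finset.sum_add_sum_compl S d
      have h2 : ∑ v ∈ B, d v + ∑ v ∈ Bᶜ, d v = ∑ v ∈ Finset.univ, d v :=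
        Finset.sum_add_sum_compl B d
      rw [← hAdef] at h2
      rw [hTS]
      omega
    have hB1 : ∑ v ∈ B, d v = k * (k - 1) + ∑ v ∈ B, ((Bᶜ).filter (G.Adj v)).card := by
      have := Finset.sum_congr rfl (fun v (_ : v ∈ B) => hptsplit B v)
      rw [this, Finset.sum_add_distrib]
      congr 1
      have heach : ∀ v ∈ B, (B.filter (G.Adj v)).card = k - 1 := by
        intro v hv
        have hefil : B.filter (G.Adj v) = B.erase v := by
          ext w
          simp only [Finset.mem_filter, Finset.mem_erase]
          constructor
          · rintro ⟨hw, hadj⟩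
            exact ⟨fun h' => G.loopless.irrefl v (h' ▸ hadj), hw⟩
          · rintro ⟨hne, hw⟩
            exact ⟨hw, hBclique (Finset.mem_coe.mpr hv) (Finset.mem_coe.mpr hw) (Ne.symm hne)⟩
        rw [hefil, Finset.card_erase_of_mem hv]
      rw [Finset.sum_congr rfl heach, Finset.sum_const, smul_eq_mul]
    have hA1 : ∑ v ∈ A, d v = ∑ v ∈ A, (B.filter (G.Adj v)).card := by
      have := Finset.sum_congr rfl (fun v (_ : v ∈ A) => hptsplit A v)
      rw [this, Finset.sum_add_distrib]
      have h0 : ∑ v ∈ A, (A.filter (G.Adj v)).card = 0 := by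
        apply Finset.sum_eq_zero
        intro v hv
        rw [Finset.card_eq_zero, Finset.filter_eq_empty_iff]
        intro w hw hadj
        exact hAindep (Finset.mem_coe.mpr hv) (Finset.mem_coe.mpr hw) (G.ne_of_adj hadj) hadj
      rw [h0, zero_add]
      congr 1
      rw [hAdef, compl_compl]
    have hAB : ∑ v ∈ A, (B.filter (G.Adj v)).card
        = ∑ v ∈ B, ((Bᶜ).filter (G.Adj v)).card := (doubleCount G B (Bᶜ)).symm
    rw [hsumSB, hsumTA, hB1, hA1, hAB, hmk]
  · intro h
    have e1 : ∑ v ∈ S, d v = (∑ v ∈ S, (S.filter (G.Adj v)).card)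
        + ∑ v ∈ S, ((Sᶜ).filter (G.Adj v)).card := by
      rw [← Finset.sum_add_distrib]
      exact Finset.sum_congr rfl fun v _ => hptsplit S v
    have e2 : ∑ v ∈ Sᶜ, d v = (∑ v ∈ Sᶜ, (S.filter (G.Adj v)).card)
        + ∑ v ∈ Sᶜ, ((Sᶜ).filter (G.Adj v)).card := by
      rw [← Finset.sum_add_distrib]
      exact Finset.sum_congr rfl fun v _ => hptsplit S v
    have hdc : ∑ v ∈ S, ((Sᶜ).filter (G.Adj v)).card
        = ∑ v ∈ Sᶜ, (S.filter (G.Adj v)).card := doubleCount G S (Sᶜ)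
    rw [hTS] at h
    have hbsub : ∀ v ∈ S, S.filter (G.Adj v) ⊆ S.erase v := by
      intro v _ w hw
      simp only [Finset.mem_filter] at hw
      exact Finset.mem_erase.mpr ⟨fun hwv => G.loopless.irrefl v (hwv ▸ hw.2), hw.1⟩
    have hbound : ∀ v ∈ S, (S.filter (G.Adj v)).card ≤ m - 1 := by
      intro v hv
      calc (S.filter (G.Adj v)).card ≤ (S.erase v).card := Finset.card_le_card (hbsub v hv)
        _ = m - 1 := by rw [Finset.card_erase_of_mem hv, hcardS]
    have hsum_le : ∑ v ∈ S, (S.filter (G.Adj v)).card ≤ m * (m - 1) := by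
      calc ∑ v ∈ S, (S.filter (G.Adj v)).card ≤ ∑ _v ∈ S, (m - 1) :=
            Finset.sum_le_sum hbound
        _ = m * (m - 1) := by rw [Finset.sum_const, hcardS, smul_eq_mul]
    obtain ⟨M, hM⟩ : ∃ M, m * (m - 1) = M := ⟨_, rfl⟩
    rw [hM] at h hsum_le
    have key : ∑ v ∈ Sᶜ, ((Sᶜ).filter (G.Adj v)).card = 0 ∧
        ∑ v ∈ S, (S.filter (G.Adj v)).card = M := by omega
    have hclique : G.IsClique (↑S : Set (Fin n)) := by
      have hEq : ∀ v ∈ S, (S.filter (G.Adj v)).card = m - 1 :=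
        (Finset.sum_eq_sum_iff_of_le hbound).mp
          (by rw [key.2, Finset.sum_const, hcardS, smul_eq_mul, hM])
      intro x hx y hy hxy
      have hx' : x ∈ S := hx
      have hy' : y ∈ S := hy
      have hfe : S.filter (G.Adj x) = S.erase x := by
        apply Finset.eq_of_subset_of_card_le (hbsub x hx')
        rw [Finset.card_erase_of_mem hx', hcardS, hEq x hx']
      have : y ∈ S.erase x := Finset.mem_erase.mpr ⟨fun h' => hxy (h' ▸ rfl), hy'⟩
      rw [← hfe] at this
      exact (Finset.mem_filter.mp this).2
    have hindep : _root_.IsIndepSet G (↑(Sᶜ) : Set (Fin n)) := by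
      intro x hx y hy _ hadj
      have h0 : ((Sᶜ).filter (G.Adj x)).card = 0 :=
        Finset.sum_eq_zero_iff.mp key.1 x hx
      have : y ∈ (Sᶜ).filter (G.Adj x) := Finset.mem_filter.mpr ⟨hy, hadj⟩
      rw [Finset.card_eq_zero.mp h0] at this
      exact absurd this (Finset.notMem_empty y)
    refine ⟨↑(Sᶜ), ↑S, hindep, hclique, ?_, ?_⟩
    · rw [Finset.coe_compl]; exact Set.compl_union_self _
    · rw [Finset.coe_compl]; exact disjoint_compl_left
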